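/- Let t, u, v, w be weights on ℝ₊, let Φ₁, Φ₂ be nondecreasing surjections of ℝ₊, and let T : S(ℝ₊) → M(ℝ₊) be positively homogeneous (|T(cf)| = |c||Tf|). Then the modular inequality ∫ Φ₁(t(x)|Tf(x)|) w(x) dx ≤ K ∫ Φ₂(K u(y)|f(y)|) v(y) dy (K independent of f) holds if and only if the family of gauge inequalities ρ_{Φ₁,t,εw}(Tf) ≤ C ρ_{Φ₂,u,εv}(f) holds with C independent of both f and ε > 0, where ρ_{Φ,u,εv}(f) = inf{λ > 0 : ∫ Φ(u(y)|f(y)|/λ)(ε/λ) v(y) dy ≤ 1}. -/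

import Mathlib

open scoped ENNReal NNReal
open MeasureTheory Set

/-- The weighted gauge `ρ_{Φ,u,εv}(f) = inf{λ>0 : ∫ Φ(u|f|/λ)(ε/λ)v ≤ 1}`, `inf ∅ = ∞`. -/
noncomputable def wgauge (Φ : ℝ → ℝ) (u v : ℝ → ℝ) (ε : ℝ) (f : ℝ → ℝ) : ℝ≥0∞ :=
  sInf ((fun l : ℝ => ENNReal.ofReal l) ''
    {l : ℝ | 0 < l ∧
      ∫⁻ y in Ioi (0:ℝ), ENNReal.ofReal (Φ (u y * |f y| / l) * (ε / l) * v y) ≤ 1})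

/-- Simple measurable functions on `ℝ₊`. -/
def IsSimple (f : ℝ → ℝ) : Prop := Measurable f ∧ (Set.range f).Finite

lemma factor_lintegral (s : Set ℝ) (c : ℝ) (hc : 0 ≤ c) (g : ℝ → ℝ) :
    ∫⁻ x in s, ENNReal.ofReal (c * g x) = ENNReal.ofReal c * ∫⁻ x in s, ENNReal.ofReal (g x) := by
  simp_rw [ENNReal.ofReal_mul hc]
  exact lintegral_const_mul' _ _ ENNReal.ofReal_ne_top

lemma wgauge_le {Φ u v : ℝ → ℝ} {ε f : _} {l : ℝ} (hl : 0 < l)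
    (h : ∫⁻ y in Ioi (0:ℝ), ENNReal.ofReal (Φ (u y * |f y| / l) * (ε / l) * v y) ≤ 1) :
    wgauge Φ u v ε f ≤ ENNReal.ofReal l :=
  sInf_le ⟨l, ⟨hl, h⟩, rfl⟩

lemma le_mul_sInf {c : ℝ≥0∞} (hc0 : c ≠ 0) (hct : c ≠ ⊤) {a : ℝ≥0∞} {S : Set ℝ≥0∞}
    (h : ∀ b ∈ S, a ≤ c * b) : a ≤ c * sInf S := by
  rcases S.eq_empty_or_nonempty with rfl | hS
  · simp [sInf_empty, ENNReal.mul_top hc0]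
  · have h1 : a / c ≤ sInf S :=
      le_sInf fun b hb => ENNReal.div_le_of_le_mul (by rw [mul_comm]; exact h b hb)
    have := (ENNReal.div_le_iff hc0 hct).mp h1
    rwa [mul_comm] at this

lemma isSimple_const_mul {f : ℝ → ℝ} (hf : IsSimple f) (c : ℝ) :
    IsSimple (fun y => c * f y) := by
  refine ⟨hf.1.const_mul c, (hf.2.image (fun x => c * x)).subset ?_⟩
  rintro _ ⟨y, rfl⟩
  exact ⟨f y, ⟨y, rfl⟩, rfl⟩

theorem stmt4 (t u v w : ℝ → ℝ)
    (ht : Measurable t) (hu : Measurable u) (hv : Measurable v) (hw : Measurable w)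
    (hpos : ∀ x > (0:ℝ), 0 < t x ∧ 0 < u x ∧ 0 < v x ∧ 0 < w x)
    (Φ₁ Φ₂ : ℝ → ℝ)
    (hΦ₁mono : MonotoneOn Φ₁ (Ioi 0)) (hΦ₁surj : SurjOn Φ₁ (Ioi 0) (Ioi 0))
    (hΦ₂mono : MonotoneOn Φ₂ (Ioi 0)) (hΦ₂surj : SurjOn Φ₂ (Ioi 0) (Ioi 0))
    (T : (ℝ → ℝ) → (ℝ → ℝ))
    (hhom : ∀ (c : ℝ) (f : ℝ → ℝ) (x : ℝ), |T (fun y => c * f y) x| = |c| * |T f x|) :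
    (∃ K > 0, ∀ f, IsSimple f →
        ∫⁻ x in Ioi (0:ℝ), ENNReal.ofReal (Φ₁ (t x * |T f x|) * w x) ≤
          ENNReal.ofReal K *
            ∫⁻ y in Ioi (0:ℝ), ENNReal.ofReal (Φ₂ (K * (u y * |f y|)) * v y)) ↔
    (∃ C > 0, ∀ ε > 0, ∀ f, IsSimple f →
        wgauge Φ₁ t w ε (T f) ≤ ENNReal.ofReal C * wgauge Φ₂ u v ε f) := by
  constructor
  · -- modular ⇒ gauge
    rintro ⟨K, hK, hmod⟩
    refine ⟨K, hK, fun ε hε f hf => ?_⟩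
    unfold wgauge
    refine le_mul_sInf (by simp [ENNReal.ofReal_eq_zero]; linarith) ENNReal.ofReal_ne_top ?_
    rintro _ ⟨l, ⟨hl0, hlint⟩, rfl⟩
    rw [← ENNReal.ofReal_mul hK.le]
    have hKl : 0 < K * l := mul_pos hK hl0
    set g : ℝ → ℝ := fun y => (K * l)⁻¹ * f y with hg_def
    have hg : IsSimple g := isSimple_const_mul hf _
    -- pointwise identities
    have habsT : ∀ x, t x * |T g x| = t x * |T f x| / (K * l) := by
      intro x
      rw [hg_def, hhom, abs_of_pos (inv_pos.2 hKl)]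
      ring
    have habsf : ∀ y, K * (u y * |g y|) = u y * |f y| / l := by
      intro y
      rw [hg_def]
      simp only [abs_mul, abs_of_pos (inv_pos.2 hKl)]
      field_simp
    refine wgauge_le (mul_pos hK hl0) ?_
    have step1 :
        ∫⁻ x in Ioi (0:ℝ), ENNReal.ofReal (Φ₁ (t x * |T f x| / (K * l)) * (ε / (K * l)) * w x)
          = ENNReal.ofReal (ε / (K * l)) *
            ∫⁻ x in Ioi (0:ℝ), ENNReal.ofReal (Φ₁ (t x * |T g x|) * w x) := by
      rw [← factor_lintegral _ _ (div_nonneg hε.le hKl.le)]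
      refine lintegral_congr fun x => ?_
      rw [habsT x]
      ring_nf
    have step2 :
        ∫⁻ y in Ioi (0:ℝ), ENNReal.ofReal (Φ₂ (K * (u y * |g y|)) * v y)
          = ∫⁻ y in Ioi (0:ℝ), ENNReal.ofReal (Φ₂ (u y * |f y| / l) * v y) := by
      refine lintegral_congr fun y => ?_
      rw [habsf y]
    have step3 :
        ∫⁻ y in Ioi (0:ℝ), ENNReal.ofReal (Φ₂ (u y * |f y| / l) * (ε / l) * v y)
          = ENNReal.ofReal (ε / l) *
            ∫⁻ y in Ioi (0:ℝ), ENNReal.ofReal (Φ₂ (u y * |f y| / l) * v y) := by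
      rw [← factor_lintegral _ _ (div_nonneg hε.le hl0.le)]
      refine lintegral_congr fun y => ?_
      ring_nf
    calc ∫⁻ x in Ioi (0:ℝ), ENNReal.ofReal (Φ₁ (t x * |T f x| / (K * l)) * (ε / (K * l)) * w x)
        = ENNReal.ofReal (ε / (K * l)) *
            ∫⁻ x in Ioi (0:ℝ), ENNReal.ofReal (Φ₁ (t x * |T g x|) * w x) := step1
      _ ≤ ENNReal.ofReal (ε / (K * l)) * (ENNReal.ofReal K *
            ∫⁻ y in Ioi (0:ℝ), ENNReal.ofReal (Φ₂ (K * (u y * |g y|)) * v y)) :=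
          mul_le_mul' le_rfl (hmod g hg)
      _ = ENNReal.ofReal (ε / l) *
            ∫⁻ y in Ioi (0:ℝ), ENNReal.ofReal (Φ₂ (u y * |f y| / l) * v y) := by
          rw [step2, ← mul_assoc, ← ENNReal.ofReal_mul (div_nonneg hε.le hKl.le)]
          congr 2
          field_simp
      _ ≤ 1 := by rw [← step3]; exact hlint
  · -- gauge ⇒ modular
    rintro ⟨C, hC, hg⟩
    refine ⟨2 * C, by linarith, fun f hf => ?_⟩
    set A : ℝ≥0∞ := ∫⁻ x in Ioi (0:ℝ), ENNReal.ofReal (Φ₁ (t x * |T f x|) * w x) with hA_def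
    set I : ℝ≥0∞ := ∫⁻ y in Ioi (0:ℝ), ENNReal.ofReal (Φ₂ (2 * C * (u y * |f y|)) * v y)
      with hI_def
    have hC2 : (0:ℝ) < 2 * C := by linarith
    have key : ∀ ε > 0, ENNReal.ofReal (2 * C * ε) * I ≤ 1 → A ≤ ENNReal.ofReal ε⁻¹ := by
      intro ε hε hcond
      have h2 : wgauge Φ₂ u v ε f ≤ ENNReal.ofReal (2 * C)⁻¹ := by
        refine wgauge_le (inv_pos.2 hC2) ?_
        have : ∫⁻ y in Ioi (0:ℝ),
            ENNReal.ofReal (Φ₂ (u y * |f y| / (2 * C)⁻¹) * (ε / (2 * C)⁻¹) * v y)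
            = ENNReal.ofReal (2 * C * ε) * I := by
          rw [hI_def, ← factor_lintegral _ _ (by positivity)]
          refine lintegral_congr fun y => ?_
          have harg : u y * |f y| / (2 * C)⁻¹ = 2 * C * (u y * |f y|) := by
            rw [div_eq_mul_inv, inv_inv]; ring
          have hco : ε / (2 * C)⁻¹ = 2 * C * ε := by
            rw [div_eq_mul_inv, inv_inv]; ring
          rw [harg, hco]
          congr 1
          ring
        rw [this]; exact hcond
      have h3 : wgauge Φ₁ t w ε (T f) < 1 := by
        refine lt_of_le_of_lt ((hg ε hε f hf).trans (mul_le_mul' le_rfl h2)) ?_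
        rw [← ENNReal.ofReal_mul hC.le]
        rw [show C * (2 * C)⁻¹ = 2⁻¹ by field_simp]
        exact ENNReal.ofReal_lt_one.2 (by norm_num)
      rw [wgauge] at h3
      obtain ⟨b, hb, hb1⟩ := sInf_lt_iff.mp h3
      obtain ⟨l, ⟨hl0, hlint⟩, rfl⟩ := hb
      have hl1 : l < 1 := ENNReal.ofReal_lt_one.mp hb1
      set B : ℝ≥0∞ := ∫⁻ x in Ioi (0:ℝ), ENNReal.ofReal (Φ₁ (t x * |T f x| / l) * w x)
        with hB_def
      have hAB : A ≤ B := by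
        refine lintegral_mono_ae (ae_restrict_of_forall_mem measurableSet_Ioi fun x hx => ?_)
        refine ENNReal.ofReal_le_ofReal
          (mul_le_mul_of_nonneg_right ?_ (hpos x hx).2.2.2.le)
        rcases eq_or_lt_of_le (abs_nonneg (T f x)) with h0 | h0
        · rw [← h0]
          simp
        · have ha : 0 < t x * |T f x| := mul_pos (hpos x hx).1 h0
          have hle : t x * |T f x| ≤ t x * |T f x| / l := le_div_self ha.le hl0 hl1.le
          exact hΦ₁mono (mem_Ioi.2 ha) (mem_Ioi.2 (lt_of_lt_of_le ha hle)) hle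
      have hBint : ENNReal.ofReal (ε / l) * B ≤ 1 := by
        rw [hB_def, ← factor_lintegral _ _ (div_nonneg hε.le hl0.le)]
        refine le_trans (le_of_eq (lintegral_congr fun x => by ring_nf)) hlint
      have hB : B ≤ (ENNReal.ofReal (ε / l))⁻¹ :=
        ENNReal.le_inv_iff_mul_le.2 (by rwa [mul_comm])
      refine hAB.trans (hB.trans ?_)
      rw [← ENNReal.ofReal_inv_of_pos (div_pos hε hl0)]
      refine ENNReal.ofReal_le_ofReal ?_
      rw [inv_div]
      rw [div_le_iff₀ hε]
      have : ε⁻¹ * ε = 1 := inv_mul_cancel₀ hε.ne'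
      linarith [this, hl1]
    rcases eq_or_ne I ⊤ with hItop | hItop
    · rw [hItop, ENNReal.mul_top (by simp [ENNReal.ofReal_eq_zero]; linarith)]
      exact le_top
    rcases eq_or_ne I 0 with hI0 | hI0
    · have hfin : ∀ ε > 0, A ≤ ENNReal.ofReal ε⁻¹ := by
        intro ε hε
        exact key ε hε (by rw [hI0, mul_zero]; exact zero_le)
      have hA1 : A ≤ ENNReal.ofReal 1 := by simpa using hfin 1 one_pos
      have hAt : A ≠ ⊤ := ne_top_of_le_ne_top ENNReal.ofReal_ne_top hA1
      have hA0 : A = 0 := by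
        by_contra h
        have ha : 0 < A.toReal := ENNReal.toReal_pos h hAt
        have := hfin (2 / A.toReal) (by positivity)
        rw [show (2 / A.toReal)⁻¹ = A.toReal / 2 by rw [inv_div]] at this
        have h2 : A.toReal ≤ A.toReal / 2 :=
          ENNReal.toReal_le_of_le_ofReal (by positivity) this
        linarith
      rw [hA0]
      exact zero_le
    · have hIt : 0 < I.toReal := ENNReal.toReal_pos hI0 hItop
      set ε : ℝ := (2 * C * I.toReal)⁻¹ with hε_def
      have hε : 0 < ε := by positivity
      have hcond : ENNReal.ofReal (2 * C * ε) * I ≤ 1 := by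
        rw [show 2 * C * ε = I.toReal⁻¹ by rw [hε_def]; field_simp]
        nth_rewrite 2 [← ENNReal.ofReal_toReal hItop]
        rw [← ENNReal.ofReal_mul (by positivity), inv_mul_cancel₀ hIt.ne']
        simp
      have := key ε hε hcond
      rw [hε_def, inv_inv, ENNReal.ofReal_mul (by positivity), ENNReal.ofReal_toReal hItop]
        at this
      exact this
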